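/- arXiv:1309.7526 — 2 statements merged into one kernel-verified Lean document; each statement's English description precedes it below -/
import Mathlib

section
/- Let d ≥ 1, N ∈ ℕ, ρ ∈ ℝ^d with 0 < ρ_i < 1 and ρ_1+⋯+ρ_d < 1, and set 𝛒 = (ρ_1,…,ρ_d, 1−ρ_1−⋯−ρ_d) ∈ ℝ^{d+1}. Then for every α ∈ ℕ^{d+1} with |α| ≤ N and every x ∈ Z_N^{d+1}, the monic Hahn polynomial with parameter t𝛒 converges to the monic Krawtchouk polynomial: lim_{t → +∞} Q_α(x; t𝛒, N) = L_α(x; ρ, N). -/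
open Finset

/-- Pochhammer symbol `(a)_k = a (a+1) ⋯ (a+k-1)`. -/
noncomputable def poch (a : ℝ) : ℕ → ℝ
  | 0 => 1
  | k + 1 => poch a k * (a + k)

/-- Multi-index Pochhammer `(x)_γ = ∏ i (x i)_{γ i}`. -/
noncomputable def pochV {m : ℕ} (x : Fin m → ℝ) (γ : Fin m → ℕ) : ℝ :=
  ∏ i, poch (x i) (γ i)

/-- Multi-index factorial `γ! = ∏ i (γ i)!` (as a real number). -/
noncomputable def mfact {m : ℕ} (γ : Fin m → ℕ) : ℝ :=
  ∏ i, (Nat.factorial (γ i) : ℝ)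

/-- Shifted monomial `m_γ(x) = (-1)^{|γ|} (-x)_γ`. -/
noncomputable def mono {m : ℕ} (γ : Fin m → ℕ) (x : Fin m → ℝ) : ℝ :=
  (-1 : ℝ) ^ (∑ i, γ i) * pochV (fun i => -(x i)) γ

/-- `Z_N^{d+1} = {α ∈ ℕ^{d+1} : |α| = N}` as a finite set. -/
def ZN (d N : ℕ) : Finset (Fin (d + 1) → ℕ) :=
  (Fintype.piFinset fun _ => Finset.range (N + 1)).filter fun α => ∑ i, α i = N

/-- `{ν ∈ ℕ^d : |ν| = n}` as a finite set. -/
def idxSet (d n : ℕ) : Finset (Fin d → ℕ) :=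
  (Fintype.piFinset fun _ => Finset.range (n + 1)).filter fun ν => ∑ i, ν i = n

/-- The finite set `{γ ∈ ℕ^m : γ ≤ α}`. -/
def below {m : ℕ} (α : Fin m → ℕ) : Finset (Fin m → ℕ) :=
  Fintype.piFinset fun i => Finset.range (α i + 1)

/-- Monic Hahn polynomial `Q_α(x; κ, N)`. -/
noncomputable def monicQ (d N : ℕ) (κ : Fin (d + 1) → ℝ) (α : Fin (d + 1) → ℕ)
    (x : Fin (d + 1) → ℝ) : ℝ :=
  poch (-(N : ℝ)) (∑ i, α i) * pochV (fun i => κ i + 1) α /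
      poch ((∑ i, κ i) + d + (∑ i, α i)) (∑ i, α i) *
    ∑ γ ∈ below α,
      pochV (fun i => -(α i : ℝ)) γ * poch ((∑ i, κ i) + d + (∑ i, α i)) (∑ i, γ i) *
          (-1 : ℝ) ^ (∑ i, γ i) /
          (mfact γ * pochV (fun i => κ i + 1) γ * poch (-(N : ℝ)) (∑ i, γ i)) *
        mono γ x

/-- One-variable Hahn polynomial `Q_n(x; a, b, M)` (a `₃F₂` sum). -/
noncomputable def hahn1 (n : ℕ) (x a b M : ℝ) : ℝ :=
  ∑ k ∈ Finset.range (n + 1),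
    poch (-(n : ℝ)) k * poch ((n : ℝ) + a + b + 1) k * poch (-x) k /
      (poch (a + 1) k * poch (-M) k * (Nat.factorial k : ℝ))

/-- The parameter `a_j = κ_{j+1}+⋯+κ_{d+1} + 2|ν^{j+1}| + d - j` (1-based `j`). -/
noncomputable def aj (d : ℕ) (κ : Fin (d + 1) → ℝ) (ν : Fin d → ℕ) (j : Fin d) : ℝ :=
  (∑ i ∈ Finset.univ.filter (fun i : Fin (d + 1) => (j : ℕ) < (i : ℕ)), κ i) +
    2 * (∑ i ∈ Finset.univ.filter (fun i : Fin d => (j : ℕ) < (i : ℕ)), (ν i : ℝ)) +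
    ((d - 1 - (j : ℕ) : ℕ) : ℝ)

/-- `|x_{j-1}| = x_1 + ⋯ + x_{j-1}` (1-based `j`). -/
noncomputable def sumLt (d : ℕ) (x : Fin (d + 1) → ℕ) (j : Fin d) : ℝ :=
  ∑ i ∈ Finset.univ.filter (fun i : Fin (d + 1) => (i : ℕ) < (j : ℕ)), (x i : ℝ)

/-- `|ν^{j+1}| = ν_{j+1} + ⋯ + ν_d` (1-based `j`). -/
noncomputable def sumGt (d : ℕ) (ν : Fin d → ℕ) (j : Fin d) : ℝ :=
  ∑ i ∈ Finset.univ.filter (fun i : Fin d => (j : ℕ) < (i : ℕ)), (ν i : ℝ)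

/-- Hahn polynomial of `d` variables `H_ν(x; κ, N)`. -/
noncomputable def hahnH (d N : ℕ) (κ : Fin (d + 1) → ℝ) (ν : Fin d → ℕ)
    (x : Fin (d + 1) → ℕ) : ℝ :=
  (-1 : ℝ) ^ (∑ i, ν i) / poch (-(N : ℝ)) (∑ i, ν i) *
    ∏ j : Fin d,
      poch (κ j.castSucc + 1) (ν j) / poch (aj d κ ν j + 1) (ν j) *
        poch (-(N : ℝ) + sumLt d x j + sumGt d ν j) (ν j) *
        hahn1 (ν j) (x j.castSucc : ℝ) (κ j.castSucc) (aj d κ ν j)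
          ((N : ℝ) - sumLt d x j - sumGt d ν j)

/-- Squared norm `B_ν(κ, N)` of the Hahn polynomial `H_ν(·; κ, N)`. -/
noncomputable def Bnorm (d N : ℕ) (κ : Fin (d + 1) → ℝ) (ν : Fin d → ℕ) : ℝ :=
  (-1 : ℝ) ^ (∑ i, ν i) * poch ((∑ i, κ i) + d + 1) (N + ∑ i, ν i) /
      (poch (-(N : ℝ)) (∑ i, ν i) * poch ((∑ i, κ i) + d + 1) N *
        poch ((∑ i, κ i) + d + 1) (2 * ∑ i, ν i)) *
    ∏ j : Fin d,
      poch (κ j.castSucc + aj d κ ν j + 1) (2 * ν j) * poch (κ j.castSucc + 1) (ν j) *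
          (Nat.factorial (ν j) : ℝ) /
        (poch (κ j.castSucc + aj d κ ν j + 1) (ν j) * poch (aj d κ ν j + 1) (ν j))

/-- Projection `Q_{α,n}(x; κ, N)` of `m_α/(κ+1)_α` onto the space of degree `n`. -/
noncomputable def monicQn (d N : ℕ) (κ : Fin (d + 1) → ℝ) (α : Fin (d + 1) → ℕ) (n : ℕ)
    (x : Fin (d + 1) → ℝ) : ℝ :=
  (-1 : ℝ) ^ (∑ i, α i) * poch (-(N : ℝ)) (∑ i, α i) * poch ((∑ i, κ i) + d + 1) (2 * n) /
      (poch (-(N : ℝ)) n * poch ((∑ i, κ i) + d + 1) ((∑ i, α i) + n)) *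
    ∑ β ∈ ZN d n,
      pochV (fun i => -(α i : ℝ)) β / (mfact β * pochV (fun i => κ i + 1) β) *
        monicQ d N κ β x

/-- The kernel `E_k(x, y; κ) = Σ_{|γ|=k} (-x)_γ (-y)_γ / (γ! (κ+1)_γ)`. -/
noncomputable def Efun (d : ℕ) (κ : Fin (d + 1) → ℝ) (x y : Fin (d + 1) → ℕ) (k : ℕ) : ℝ :=
  ∑ γ ∈ ZN d k,
    pochV (fun i => -(x i : ℝ)) γ * pochV (fun i => -(y i : ℝ)) γ /
      (mfact γ * pochV (fun i => κ i + 1) γ)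

/-- Monic Jacobi polynomial on the simplex `R_α^κ(x)`. -/
noncomputable def jacobiR (d : ℕ) (κ : Fin (d + 1) → ℝ) (α : Fin (d + 1) → ℕ)
    (x : Fin d → ℝ) : ℝ :=
  (-1 : ℝ) ^ (∑ i, α i) * pochV (fun i => κ i + 1) α /
      poch ((∑ i, κ i) + d + (∑ i, α i)) (∑ i, α i) *
    ∑ γ ∈ below α,
      pochV (fun i => -(α i : ℝ)) γ * poch ((∑ i, κ i) + d + (∑ i, α i)) (∑ i, γ i) /
          (pochV (fun i => κ i + 1) γ * mfact γ) *
        ∏ i, (Fin.snoc x (1 - ∑ i, x i) : Fin (d + 1) → ℝ) i ^ γ i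

/-- One-variable Krawtchouk polynomial `K_n(x; p, M)`. -/
noncomputable def kraw1 (n : ℕ) (x p M : ℝ) : ℝ :=
  ∑ k ∈ Finset.range (n + 1),
    poch (-(n : ℝ)) k * poch (-x) k / (poch (-M) k * (Nat.factorial k : ℝ) * p ^ k)

/-- The extended parameter `𝛒 = (ρ_1, …, ρ_d, 1 - |ρ|)`. -/
noncomputable def brho (d : ℕ) (ρ : Fin d → ℝ) : Fin (d + 1) → ℝ :=
  Fin.snoc ρ (1 - ∑ i, ρ i)

/-- `𝛒^γ = ∏ i 𝛒_i^{γ i}`. -/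
noncomputable def bpow (d : ℕ) (ρ : Fin d → ℝ) (γ : Fin (d + 1) → ℕ) : ℝ :=
  ∏ i, brho d ρ i ^ γ i

/-- `|𝛒_j| = ρ_1 + ⋯ + ρ_j` (1-based `j`). -/
noncomputable def sumLe (d : ℕ) (ρ : Fin d → ℝ) (j : Fin d) : ℝ :=
  ∑ i ∈ Finset.univ.filter (fun i : Fin d => (i : ℕ) ≤ (j : ℕ)), ρ i

/-- `|𝛒_{j-1}| = ρ_1 + ⋯ + ρ_{j-1}` (1-based `j`). -/
noncomputable def sumLtρ (d : ℕ) (ρ : Fin d → ℝ) (j : Fin d) : ℝ :=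
  ∑ i ∈ Finset.univ.filter (fun i : Fin d => (i : ℕ) < (j : ℕ)), ρ i

/-- Krawtchouk polynomial of `d` variables `K_ν(x; ρ, N)`. -/
noncomputable def krawH (d N : ℕ) (ρ : Fin d → ℝ) (ν : Fin d → ℕ)
    (x : Fin (d + 1) → ℕ) : ℝ :=
  (-1 : ℝ) ^ (∑ i, ν i) / poch (-(N : ℝ)) (∑ i, ν i) *
    ∏ j : Fin d,
      ρ j ^ ν j / (1 - sumLe d ρ j) ^ ν j *
        poch (-(N : ℝ) + sumLt d x j + sumGt d ν j) (ν j) *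
        kraw1 (ν j) (x j.castSucc : ℝ) (ρ j / (1 - sumLtρ d ρ j))
          ((N : ℝ) - sumLt d x j - sumGt d ν j)

/-- Squared norm `C_ν(ρ, N)` of the Krawtchouk polynomial `K_ν(·; ρ, N)`. -/
noncomputable def Cnorm (d N : ℕ) (ρ : Fin d → ℝ) (ν : Fin d → ℕ) : ℝ :=
  (-1 : ℝ) ^ (∑ i, ν i) / (poch (-(N : ℝ)) (∑ i, ν i) * (Nat.factorial N : ℝ)) *
    ∏ j : Fin d,
      (Nat.factorial (ν j) : ℝ) * ρ j ^ ν j /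
        (1 - sumLe d ρ j) ^ ((ν j : ℤ) - ((Fin.snoc ν 0 : Fin (d + 1) → ℕ) j.succ : ℤ))

/-- Monic Krawtchouk polynomial `L_α(x; ρ, N)`. -/
noncomputable def monicL (d N : ℕ) (ρ : Fin d → ℝ) (α : Fin (d + 1) → ℕ)
    (x : Fin (d + 1) → ℝ) : ℝ :=
  poch (-(N : ℝ)) (∑ i, α i) * bpow d ρ α *
    ∑ γ ∈ below α,
      pochV (fun i => -(α i : ℝ)) γ * (-1 : ℝ) ^ (∑ i, γ i) /
          (mfact γ * poch (-(N : ℝ)) (∑ i, γ i) * bpow d ρ γ) *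
        mono γ x

/-- Projection `L_{α,n}(x; ρ, N)` of `m_α/𝛒^α` onto the space of degree `n`. -/
noncomputable def monicLn (d N : ℕ) (ρ : Fin d → ℝ) (α : Fin (d + 1) → ℕ) (n : ℕ)
    (x : Fin (d + 1) → ℝ) : ℝ :=
  (-1 : ℝ) ^ (∑ i, α i) * poch (-(N : ℝ)) (∑ i, α i) / poch (-(N : ℝ)) n *
    ∑ β ∈ ZN d n,
      pochV (fun i => -(α i : ℝ)) β / (mfact β * bpow d ρ β) * monicL d N ρ β x

/-- The kernel `F_k(x, y; ρ) = Σ_{|γ|=k} (-x)_γ (-y)_γ / (γ! 𝛒^γ)`. -/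
noncomputable def Ffun (d : ℕ) (ρ : Fin d → ℝ) (x y : Fin (d + 1) → ℕ) (k : ℕ) : ℝ :=
  ∑ γ ∈ ZN d k,
    pochV (fun i => -(x i : ℝ)) γ * pochV (fun i => -(y i : ℝ)) γ / (mfact γ * bpow d ρ γ)


open Filter in
private lemma poch_eq_prod' (a : ℝ) (n : ℕ) : poch a n = ∏ k ∈ Finset.range n, (a + k) := by
  induction n with
  | zero => simp [poch]
  | succ n ih => rw [poch, ih, Finset.prod_range_succ]

private lemma div_div_same' (x y u : ℝ) (hu : u ≠ 0) : (x / u) / (y / u) = x / y := by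
  rcases eq_or_ne y 0 with h | h
  · simp [h]
  · field_simp

open Filter in
private lemma tendsto_poch_div (a b : ℝ) (n : ℕ) :
    Filter.Tendsto (fun t : ℝ => poch (t * a + b) n / t ^ n) Filter.atTop (nhds (a ^ n)) := by
  have h : ∀ᶠ t in Filter.atTop,
      (fun t : ℝ => ∏ k ∈ Finset.range n, (a + (b + k) / t)) t
        = poch (t * a + b) n / t ^ n := by
    filter_upwards [Filter.eventually_gt_atTop (0 : ℝ)] with t ht
    rw [poch_eq_prod']
    rw [show (t : ℝ) ^ n = ∏ _k ∈ Finset.range n, t by simp, ← Finset.prod_div_distrib]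
    refine Finset.prod_congr rfl fun k _ => ?_
    field_simp
    ring
  refine Filter.Tendsto.congr' h ?_
  have : (a : ℝ) ^ n = ∏ _k ∈ Finset.range n, a := by simp
  rw [this]
  refine tendsto_finset_prod _ fun k _ => ?_
  have h0 : Filter.Tendsto (fun t : ℝ => (b + k) / t) Filter.atTop (nhds 0) :=
    Filter.Tendsto.div_atTop tendsto_const_nhds Filter.tendsto_id
  simpa using (tendsto_const_nhds (x := a)).add h0

open Filter in
private lemma tendsto_poch_div_one (b c : ℝ) (n : ℕ) :
    Filter.Tendsto (fun t : ℝ => poch (t + b + c) n / t ^ n) Filter.atTop (nhds 1) := by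
  have := tendsto_poch_div 1 (b + c) n
  simpa [add_assoc] using this

private lemma scale_cancel' (a P c m Q e u : ℝ) (hu : u ≠ 0) :
    a * (P / u) * c / (m * (Q / u) * e) = a * P * c / (m * Q * e) := by
  rw [show a * (P / u) * c = a * P * c / u from by ring,
    show m * (Q / u) * e = m * Q * e / u from by ring,
    div_div_same' _ _ _ hu]

private lemma poch_neg_nat_ne_zero (N k : ℕ) (h : k ≤ N) : poch (-(N : ℝ)) k ≠ 0 := by
  rw [poch_eq_prod']
  refine Finset.prod_ne_zero_iff.mpr fun j hj => ?_
  have hjN : j < N := lt_of_lt_of_le (Finset.mem_range.mp hj) h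
  have : (j : ℝ) < N := by exact_mod_cast hjN
  intro h0; linarith

/-- the monic Hahn polynomials with parameter `t𝛒` converge to the monic
Krawtchouk polynomials as `t → ∞`. -/
theorem monicHahn_tendsto_monicKrawtchouk (d N : ℕ) (hd : 1 ≤ d) (ρ : Fin d → ℝ)
    (hρ : ∀ i, 0 < ρ i ∧ ρ i < 1) (hρs : ∑ i, ρ i < 1)
    (α : Fin (d + 1) → ℕ) (hα : ∑ i, α i ≤ N)
    (x : Fin (d + 1) → ℕ) (hx : x ∈ ZN d N) :
    Filter.Tendsto
      (fun t : ℝ => monicQ d N (fun i => t * brho d ρ i) α (fun i => (x i : ℝ)))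
      Filter.atTop (nhds (monicL d N ρ α (fun i => (x i : ℝ)))) := by
  classical
  have hbr : ∀ i, 0 < brho d ρ i := by
    intro i
    refine Fin.lastCases ?_ ?_ i
    · simpa [brho] using (by linarith : (0 : ℝ) < 1 - ∑ i, ρ i)
    · intro j; simpa [brho] using (hρ j).1
  have hbs : ∑ i, brho d ρ i = 1 := by
    rw [Fin.sum_univ_castSucc]
    simp [brho]
  have hS : ∀ t : ℝ, (∑ i, t * brho d ρ i) = t := by
    intro t; rw [← Finset.mul_sum, hbs, mul_one]
  have hγle : ∀ γ ∈ below α, ∑ i, γ i ≤ N := by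
    intro γ hγ
    refine le_trans (Finset.sum_le_sum fun i _ => ?_) hα
    have := (Fintype.mem_piFinset.mp hγ) i
    exact Nat.lt_succ_iff.mp (Finset.mem_range.mp this)
  set n := ∑ i, α i with hn
  set X : Fin (d + 1) → ℝ := fun i => (x i : ℝ) with hX
  set G : ℝ → ℝ := fun t =>
    poch (-(N : ℝ)) n * (∏ i, poch (t * brho d ρ i + 1) (α i) / t ^ (α i)) /
        (poch (t + (d : ℝ) + (n : ℝ)) n / t ^ n) *
      ∑ γ ∈ below α,
        pochV (fun i => -(α i : ℝ)) γ *
            (poch (t + (d : ℝ) + (n : ℝ)) (∑ i, γ i) / t ^ (∑ i, γ i)) *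
            (-1 : ℝ) ^ (∑ i, γ i) /
            (mfact γ * (∏ i, poch (t * brho d ρ i + 1) (γ i) / t ^ (γ i)) *
              poch (-(N : ℝ)) (∑ i, γ i)) *
          mono γ X with hG
  have heq : G =ᶠ[Filter.atTop]
      fun t : ℝ => monicQ d N (fun i => t * brho d ρ i) α X := by
    filter_upwards [Filter.eventually_gt_atTop (0 : ℝ)] with t ht
    have ht' : t ≠ 0 := ne_of_gt ht
    simp only [hG, monicQ, hS t, pochV]
    congr 1
    · rw [Finset.prod_div_distrib, Finset.prod_pow_eq_pow_sum, ← hn,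
        ← mul_div_assoc, div_div_same' _ _ _ (pow_ne_zero _ ht')]
    · refine Finset.sum_congr rfl fun γ _ => ?_
      congr 1
      simp only [← hn]
      rw [Finset.prod_div_distrib, Finset.prod_pow_eq_pow_sum]
      exact scale_cancel' _ _ _ _ _ _ _ (pow_ne_zero _ ht')
  have hT : Filter.Tendsto G Filter.atTop (nhds
      (poch (-(N : ℝ)) n * (∏ i, brho d ρ i ^ α i) / 1 *
        ∑ γ ∈ below α,
          pochV (fun i => -(α i : ℝ)) γ * 1 * (-1 : ℝ) ^ (∑ i, γ i) /
              (mfact γ * (∏ i, brho d ρ i ^ γ i) * poch (-(N : ℝ)) (∑ i, γ i)) *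
            mono γ X)) := by
    have hP : ∀ β : Fin (d + 1) → ℕ,
        Filter.Tendsto (fun t : ℝ => ∏ i, poch (t * brho d ρ i + 1) (β i) / t ^ (β i))
          Filter.atTop (nhds (∏ i, brho d ρ i ^ β i)) := by
      intro β
      exact tendsto_finset_prod _ fun i _ => tendsto_poch_div (brho d ρ i) 1 (β i)
    have hD : ∀ m : ℕ,
        Filter.Tendsto (fun t : ℝ => poch (t + (d : ℝ) + (n : ℝ)) m / t ^ m)
          Filter.atTop (nhds 1) := fun m => tendsto_poch_div_one (d : ℝ) (n : ℝ) m
    refine Filter.Tendsto.mul (Filter.Tendsto.div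
      (Filter.Tendsto.mul tendsto_const_nhds (hP α)) (hD n) one_ne_zero) ?_
    refine tendsto_finset_sum _ fun γ hγ => ?_
    have hne : mfact γ * (∏ i, brho d ρ i ^ γ i) * poch (-(N : ℝ)) (∑ i, γ i) ≠ 0 := by
      refine mul_ne_zero (mul_ne_zero ?_ ?_) (poch_neg_nat_ne_zero N _ (hγle γ hγ))
      · have : 0 < mfact γ := by
          unfold mfact
          exact Finset.prod_pos fun i _ => by positivity
        exact ne_of_gt this
      · exact ne_of_gt (Finset.prod_pos fun i _ => pow_pos (hbr i) _)
    exact Filter.Tendsto.mul (Filter.Tendsto.div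
      (Filter.Tendsto.mul (Filter.Tendsto.mul tendsto_const_nhds (hD _))
        tendsto_const_nhds)
      (Filter.Tendsto.mul (Filter.Tendsto.mul tendsto_const_nhds (hP γ))
        tendsto_const_nhds) hne) tendsto_const_nhds
  have hV : monicL d N ρ α X =
      poch (-(N : ℝ)) n * (∏ i, brho d ρ i ^ α i) / 1 *
        ∑ γ ∈ below α,
          pochV (fun i => -(α i : ℝ)) γ * 1 * (-1 : ℝ) ^ (∑ i, γ i) /
              (mfact γ * (∏ i, brho d ρ i ^ γ i) * poch (-(N : ℝ)) (∑ i, γ i)) *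
            mono γ X := by
    simp only [monicL, bpow, ← hn, div_one]
    congr 1
    refine Finset.sum_congr rfl fun γ _ => ?_
    ring
  rw [hV]
  exact Filter.Tendsto.congr' heq hT
end

section
/- Let d ≥ 1, N ∈ ℕ, ρ ∈ ℝ^d with 0 < ρ_i < 1 and ρ_1+⋯+ρ_d < 1. Then for every x ∈ Z_N^{d+1} and every α ∈ ℕ^{d+1} with |α| ≤ N, the shifted monomial m_α expands in monic Krawtchouk polynomials as m_α(x) = (−1)^{|α|} (−N)_{|α|} 𝛒^α · Σ_{β ≤ α} ((−α)_β / (β! (−N)_{|β|} 𝛒^β)) · L_β(x; ρ, N). -/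
open Finset

section AuxKraw

lemma pochNN (b g : ℕ) : poch (-(b : ℝ)) g = (-1 : ℝ) ^ g * g.factorial * b.choose g := by
  induction g with
  | zero => simp [poch]
  | succ g ih =>
    rw [poch, ih]
    rcases le_or_gt (g + 1) b with h | h
    · have hc := Nat.choose_succ_right_eq b g
      have hgb : g ≤ b := le_of_lt h
      have : ((b.choose (g+1) : ℝ)) * (g+1) = (b.choose g : ℝ) * ((b : ℝ) - g) := by
        have := congrArg (fun n : ℕ => (n : ℝ)) hc
        push_cast at this
        rw [this, Nat.cast_sub hgb]
      push_cast [Nat.factorial_succ]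
      linear_combination (-(-1:ℝ)^(g+1) * (g.factorial : ℝ)) * this
    · have h1 : b.choose (g + 1) = 0 := Nat.choose_eq_zero_of_lt (by omega)
      rcases Nat.lt_or_ge b g with h2 | h2
      · have : b.choose g = 0 := Nat.choose_eq_zero_of_lt h2
        simp [this, h1]
      · have hbg : b = g := by omega
        subst hbg
        simp [h1]

lemma key0 (a g : ℕ) : ∑ b ∈ Finset.range (a + 1), (-1 : ℝ) ^ b * (a.choose b) * (b.choose g)
    = if g = a then (-1 : ℝ) ^ a else 0 := by
  rcases le_or_gt g a with hga | hga
  · have hsplit : Finset.range (a + 1) = Finset.range g ∪ Finset.Ico g (a + 1) := by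
      rw [Finset.range_eq_Ico, Finset.range_eq_Ico,
        Finset.Ico_union_Ico_eq_Ico (Nat.zero_le g) (by omega)]
    rw [hsplit, Finset.sum_union (by
      rw [Finset.range_eq_Ico]
      exact Finset.Ico_disjoint_Ico_consecutive 0 g (a + 1))]
    have h1 : ∑ b ∈ Finset.range g, (-1 : ℝ) ^ b * (a.choose b) * (b.choose g) = 0 := by
      apply Finset.sum_eq_zero
      intro b hb
      simp only [Finset.mem_range] at hb
      rw [Nat.choose_eq_zero_of_lt (show b < g from hb)]
      simp
    rw [h1, zero_add]
    rw [Finset.sum_Ico_eq_sum_range]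
    have hidx : a + 1 - g = (a - g) + 1 := by omega
    rw [hidx]
    have h2 : ∀ c ∈ Finset.range ((a - g) + 1),
        (-1 : ℝ) ^ (g + c) * (a.choose (g + c)) * ((g + c).choose g)
        = (-1 : ℝ) ^ g * (a.choose g) * ((-1 : ℝ) ^ c * ((a - g).choose c)) := by
      intro c hc
      simp only [Finset.mem_range] at hc
      have hle : g + c ≤ a := by omega
      have := Nat.choose_mul (n := a) (Nat.le_add_right g c)
      rw [Nat.add_sub_cancel_left] at this
      have hcast : (a.choose (g + c) : ℝ) * ((g + c).choose g : ℝ)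
          = (a.choose g : ℝ) * ((a - g).choose c : ℝ) := by exact_mod_cast this
      rw [pow_add]
      linear_combination ((-1:ℝ)^g * (-1:ℝ)^c) * hcast
    rw [Finset.sum_congr rfl h2, ← Finset.mul_sum]
    have halt : ∑ c ∈ Finset.range ((a - g) + 1), (-1 : ℝ) ^ c * ((a - g).choose c)
        = if a - g = 0 then 1 else 0 := by
      have := Int.alternating_sum_range_choose (n := a - g)
      exact_mod_cast congrArg (fun z : ℤ => (z : ℝ)) this
    rw [halt]
    rcases eq_or_ne g a with h | h
    · subst h; simp
    · have : a - g ≠ 0 := by omega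
      simp [this, h]
  · have : ∀ b ∈ Finset.range (a + 1), (-1 : ℝ) ^ b * (a.choose b) * (b.choose g) = 0 := by
      intro b hb
      simp only [Finset.mem_range] at hb
      rw [Nat.choose_eq_zero_of_lt (show b < g by omega)]
      simp
    rw [Finset.sum_eq_zero this, if_neg (by omega)]

lemma key1 (a g : ℕ) : ∑ b ∈ Finset.range (a + 1),
    poch (-(a : ℝ)) b * poch (-(b : ℝ)) g / b.factorial
    = if g = a then (a.factorial : ℝ) else 0 := by
  have h : ∀ b ∈ Finset.range (a + 1),
      poch (-(a : ℝ)) b * poch (-(b : ℝ)) g / b.factorial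
      = ((-1 : ℝ) ^ g * g.factorial) * ((-1 : ℝ) ^ b * (a.choose b) * (b.choose g)) := by
    intro b _
    rw [pochNN, pochNN]
    have hb : (b.factorial : ℝ) ≠ 0 := Nat.cast_ne_zero.mpr b.factorial_ne_zero
    field_simp
  rw [Finset.sum_congr rfl h, ← Finset.mul_sum, key0]
  rcases eq_or_ne g a with h | h
  · subst h
    simp only [eq_self_iff_true, if_true]
    have he : (-1:ℝ)^g * (-1:ℝ)^g = 1 := by
      rw [← pow_add]; exact Even.neg_one_pow ⟨g, rfl⟩
    linear_combination (g.factorial : ℝ) * he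
  · simp [h]

lemma pochN_ne_zero {N k : ℕ} (h : k ≤ N) : poch (-(N : ℝ)) k ≠ 0 := by
  rw [pochNN]
  exact mul_ne_zero (mul_ne_zero (pow_ne_zero _ (by norm_num))
    (Nat.cast_ne_zero.mpr k.factorial_ne_zero))
    (Nat.cast_ne_zero.mpr (Nat.choose_pos h).ne')

lemma mfact_ne_zero {m : ℕ} (γ : Fin m → ℕ) : mfact γ ≠ 0 := by
  rw [mfact]
  exact Finset.prod_ne_zero_iff.mpr fun i _ => Nat.cast_ne_zero.mpr (γ i).factorial_ne_zero

lemma brho_pos (d : ℕ) (ρ : Fin d → ℝ) (hρ : ∀ i, 0 < ρ i) (hρs : ∑ i, ρ i < 1) :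
    ∀ i, 0 < brho d ρ i := by
  intro i
  refine Fin.lastCases ?_ (fun j => ?_) i
  · rw [brho, Fin.snoc_last]; linarith
  · rw [brho, Fin.snoc_castSucc]; exact hρ j

lemma bpow_ne_zero (d : ℕ) (ρ : Fin d → ℝ) (hρ : ∀ i, 0 < ρ i) (hρs : ∑ i, ρ i < 1)
    (γ : Fin (d + 1) → ℕ) : bpow d ρ γ ≠ 0 := by
  rw [bpow]
  exact Finset.prod_ne_zero_iff.mpr fun i _ =>
    pow_ne_zero _ (brho_pos d ρ hρ hρs i).ne'

lemma prod_ite_eq_all {m : ℕ} (γ α : Fin m → ℕ) (f : Fin m → ℝ) :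
    (∏ i, if γ i = α i then f i else 0) = if γ = α then ∏ i, f i else 0 := by
  by_cases h : γ = α
  · subst h; simp
  · rw [if_neg h]
    obtain ⟨i, hi⟩ := Function.ne_iff.mp h
    exact Finset.prod_eq_zero (Finset.mem_univ i) (if_neg hi)

lemma mem_below {m : ℕ} {α β : Fin m → ℕ} : β ∈ below α ↔ ∀ i, β i ≤ α i := by
  simp [below, Fintype.mem_piFinset, Nat.lt_succ_iff]

lemma sum_below_prod {m : ℕ} (α γ : Fin m → ℕ) :
    ∑ β ∈ below α, pochV (fun i => -(α i : ℝ)) β * pochV (fun i => -(β i : ℝ)) γ / mfact β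
    = if γ = α then mfact α else 0 := by
  have h1 : ∀ β ∈ below α,
      pochV (fun i => -(α i : ℝ)) β * pochV (fun i => -(β i : ℝ)) γ / mfact β
      = ∏ i, (poch (-(α i : ℝ)) (β i) * poch (-(β i : ℝ)) (γ i) / ((β i).factorial : ℝ)) := by
    intro β _
    simp only [pochV, mfact]
    rw [← Finset.prod_mul_distrib, ← Finset.prod_div_distrib]
  rw [Finset.sum_congr rfl h1]
  unfold below
  rw [← Finset.prod_univ_sum (t := fun i => Finset.range (α i + 1))
    (f := fun i b => poch (-(α i : ℝ)) b * poch (-(b : ℝ)) (γ i) / (b.factorial : ℝ))]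
  rw [Finset.prod_congr rfl (fun i _ => key1 (α i) (γ i)), prod_ite_eq_all]
  by_cases h : γ = α
  · simp only [h, if_true, mfact]
  · simp [h]

end AuxKraw

/-- expansion of the shifted monomial `m_α` in monic Krawtchouk
polynomials. -/
theorem mono_eq_sum_monicKrawtchouk (d N : ℕ) (hd : 1 ≤ d) (ρ : Fin d → ℝ)
    (hρ : ∀ i, 0 < ρ i ∧ ρ i < 1) (hρs : ∑ i, ρ i < 1)
    (x : Fin (d + 1) → ℕ) (hx : x ∈ ZN d N)
    (α : Fin (d + 1) → ℕ) (hα : ∑ i, α i ≤ N) :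
    mono α (fun i => (x i : ℝ)) =
      (-1 : ℝ) ^ (∑ i, α i) * poch (-(N : ℝ)) (∑ i, α i) * bpow d ρ α *
        ∑ β ∈ below α,
          pochV (fun i => -(α i : ℝ)) β /
              (mfact β * poch (-(N : ℝ)) (∑ i, β i) * bpow d ρ β) *
            monicL d N ρ β (fun i => (x i : ℝ)) := by
  classical
  have hbpos : ∀ i, 0 < brho d ρ i := brho_pos d ρ (fun i => (hρ i).1) hρs
  have hb : ∀ γ : Fin (d + 1) → ℕ, bpow d ρ γ ≠ 0 :=
    bpow_ne_zero d ρ (fun i => (hρ i).1) hρs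
  have hsum : ∀ β ∈ below α, ∑ i, β i ≤ N := by
    intro β hβ
    exact le_trans (Finset.sum_le_sum fun i _ => (mem_below.mp hβ) i) hα
  have hstep : ∀ β ∈ below α,
      pochV (fun i => -(α i : ℝ)) β /
          (mfact β * poch (-(N : ℝ)) (∑ i, β i) * bpow d ρ β) *
        monicL d N ρ β (fun i => (x i : ℝ))
      = ∑ γ ∈ below α,
          pochV (fun i => -(α i : ℝ)) β * pochV (fun i => -(β i : ℝ)) γ / mfact β *
            ((-1 : ℝ) ^ (∑ i, γ i) /
                (mfact γ * poch (-(N : ℝ)) (∑ i, γ i) * bpow d ρ γ) *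
              mono γ (fun i => (x i : ℝ))) := by
    intro β hβ
    unfold monicL
    have hsub : below β ⊆ below α := by
      intro γ hγ
      rw [mem_below] at hγ ⊢
      exact fun i => le_trans (hγ i) (mem_below.mp hβ i)
    have hext : ∑ γ ∈ below β,
        pochV (fun i => -(β i : ℝ)) γ * (-1 : ℝ) ^ (∑ i, γ i) /
            (mfact γ * poch (-(N : ℝ)) (∑ i, γ i) * bpow d ρ γ) *
          mono γ (fun i => (x i : ℝ))
        = ∑ γ ∈ below α,
        pochV (fun i => -(β i : ℝ)) γ * (-1 : ℝ) ^ (∑ i, γ i) /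
            (mfact γ * poch (-(N : ℝ)) (∑ i, γ i) * bpow d ρ γ) *
          mono γ (fun i => (x i : ℝ)) := by
      apply Finset.sum_subset hsub
      intro γ hγα hγβ
      have hex : ∃ i, β i < γ i := by
        by_contra hc
        push_neg at hc
        exact hγβ (mem_below.mpr hc)
      obtain ⟨i, hi⟩ := hex
      have h0 : pochV (fun i => -(β i : ℝ)) γ = 0 := by
        unfold pochV
        apply Finset.prod_eq_zero (Finset.mem_univ i)
        rw [pochNN, Nat.choose_eq_zero_of_lt hi]
        simp
      rw [h0]
      simp
    rw [hext, Finset.mul_sum, Finset.mul_sum]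
    refine Finset.sum_congr rfl fun γ hγ => ?_
    have hPβ := pochN_ne_zero (hsum β hβ)
    have hPγ := pochN_ne_zero (hsum γ hγ)
    have hbβ := hb β
    have hbγ := hb γ
    have hmβ := mfact_ne_zero β
    have hmγ := mfact_ne_zero γ
    field_simp
  rw [Finset.sum_congr rfl hstep, Finset.sum_comm]
  have hinner : ∀ γ ∈ below α,
      ∑ β ∈ below α,
          pochV (fun i => -(α i : ℝ)) β * pochV (fun i => -(β i : ℝ)) γ / mfact β *
            ((-1 : ℝ) ^ (∑ i, γ i) /
                (mfact γ * poch (-(N : ℝ)) (∑ i, γ i) * bpow d ρ γ) *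
              mono γ (fun i => (x i : ℝ)))
      = (if γ = α then mfact α else 0) *
          ((-1 : ℝ) ^ (∑ i, γ i) /
              (mfact γ * poch (-(N : ℝ)) (∑ i, γ i) * bpow d ρ γ) *
            mono γ (fun i => (x i : ℝ))) := by
    intro γ _
    rw [← Finset.sum_mul, sum_below_prod]
  rw [Finset.sum_congr rfl hinner]
  have hαmem : α ∈ below α := mem_below.mpr fun i => le_rfl
  rw [Finset.sum_eq_single_of_mem α hαmem (fun γ _ hne => by rw [if_neg hne, zero_mul]),
    if_pos rfl]
  have hPα := pochN_ne_zero hα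
  have hbα := hb α
  have hmα := mfact_ne_zero α
  have he : (-1 : ℝ) ^ (∑ i, α i) * (-1 : ℝ) ^ (∑ i, α i) = 1 := by
    rw [← pow_add]; exact Even.neg_one_pow ⟨∑ i, α i, rfl⟩
  field_simp
  linear_combination (-(1 : ℝ) * mono α (fun i => (x i : ℝ))) * he
end
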